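/- Let C be a q-ary code of length n with dimension k = log_q |C|, containing at least two codewords, and suppose C has (r, ℓ)-cooperative locality for positive integers r and ℓ. Then the rate of C is bounded as k/n ≤ r/(r + ℓ) + (1/n)·(ℓ²/r). -/

import Mathlib

/-- A code `C ⊆ (Fin n → Fin q)` has `(r, ℓ)`-cooperative locality: for every set `S`
of `ℓ` coordinates there is a set `Γ` of at most `r` coordinates, disjoint from `S`,
such that any two codewords agreeing on `Γ` agree on `S`. -/
def CoopLocal {n q : ℕ} (C : Finset (Fin n → Fin q)) (r ℓ : ℕ) : Prop :=
  ∀ S : Finset (Fin n), S.card = ℓ →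
    ∃ Γ : Finset (Fin n), Disjoint Γ S ∧ Γ.card ≤ r ∧
      ∀ c₁ ∈ C, ∀ c₂ ∈ C, (∀ i ∈ Γ, c₁ i = c₂ i) → ∀ i ∈ S, c₁ i = c₂ i

lemma coop_key {n q : ℕ} (C : Finset (Fin n → Fin q)) (r ℓ : ℕ)
    (hloc : CoopLocal C r ℓ) :
    ∀ t : ℕ, ∀ A : Finset (Fin n), A.card + t * (r + ℓ) ≤ n + r →
      ∃ D : Finset (Fin n), Disjoint D A ∧ D.card = t * ℓ ∧
        ∀ c₁ ∈ C, ∀ c₂ ∈ C, (∀ x, x ∉ D → c₁ x = c₂ x) → c₁ = c₂ := by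
  intro t
  induction t with
  | zero =>
    intro A _
    exact ⟨∅, by simp, by simp, fun c₁ _ c₂ _ h => funext fun x => h x (by simp)⟩
  | succ t ih =>
    intro A hA
    have hmul : (t + 1) * (r + ℓ) = t * (r + ℓ) + (r + ℓ) := by ring
    have h1 : A.card + ℓ ≤ n := by omega
    have h2 : ℓ ≤ (Aᶜ).card := by
      rw [Finset.card_compl, Fintype.card_fin]
      omega
    obtain ⟨S, hSsub, hScard⟩ := Finset.exists_subset_card_eq h2
    obtain ⟨Γ, hΓS, hΓr, hrep⟩ := hloc S hScard
    set A' := A ∪ S ∪ Γ with hA'def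
    have hA'card : A'.card ≤ A.card + ℓ + r := by
      calc A'.card ≤ (A ∪ S).card + Γ.card := Finset.card_union_le _ _
        _ ≤ A.card + S.card + Γ.card := by
            exact Nat.add_le_add_right (Finset.card_union_le _ _) _
        _ ≤ A.card + ℓ + r := by omega
    have h3 : A'.card + t * (r + ℓ) ≤ n + r := by omega
    obtain ⟨D', hD'A', hD'card, hP⟩ := ih A' h3
    have hSA' : S ⊆ A' := fun x hx => by
      simp [hA'def, Finset.mem_union, hx]
    have hΓA' : Γ ⊆ A' := fun x hx => by
      simp [hA'def, Finset.mem_union, hx]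
    have hSD' : Disjoint S D' := (hD'A'.mono_right hSA').symm
    have hSA : Disjoint S A := Finset.disjoint_left.mpr fun x hx =>
      Finset.mem_compl.mp (hSsub hx)
    refine ⟨S ∪ D', ?_, ?_, ?_⟩
    · rw [Finset.disjoint_union_left]
      exact ⟨hSA, hD'A'.mono_right (Finset.subset_union_left.trans Finset.subset_union_left)⟩
    · rw [Finset.card_union_of_disjoint hSD', hScard, hD'card]
      ring
    · intro c₁ hc₁ c₂ hc₂ hagree
      have hΓagree : ∀ i ∈ Γ, c₁ i = c₂ i := by
        intro i hi
        apply hagree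
        rw [Finset.mem_union]
        push_neg
        constructor
        · exact Finset.disjoint_left.mp hΓS hi
        · exact Finset.disjoint_right.mp hD'A' (hΓA' hi)
      have hSagree : ∀ i ∈ S, c₁ i = c₂ i := hrep c₁ hc₁ c₂ hc₂ hΓagree
      apply hP c₁ hc₁ c₂ hc₂
      intro x hx
      by_cases hxS : x ∈ S
      · exact hSagree x hxS
      · exact hagree x (by rw [Finset.mem_union]; push_neg; exact ⟨hxS, hx⟩)

/-- rate bound `k/n ≤ r/(r + ℓ) + (1/n)(ℓ²/r)` for a `q`-ary code
with `(r, ℓ)`-cooperative locality and dimension `k = log_q |C|`. -/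
theorem stmt_2 (q n r ℓ : ℕ) (hr : 0 < r) (hℓ : 0 < ℓ)
    (C : Finset (Fin n → Fin q)) (hC : 2 ≤ C.card)
    (hloc : CoopLocal C r ℓ)
    (k : ℝ) (hk : k = Real.logb q C.card) :
    k / n ≤ r / (r + ℓ) + (1 / n) * ((ℓ : ℝ) ^ 2 / r) := by
  -- basic cardinality facts
  have hCuniv : C.card ≤ q ^ n := by
    calc C.card ≤ Fintype.card (Fin n → Fin q) := Finset.card_le_univ C
      _ = q ^ n := by simp
  have hq2 : 2 ≤ q := by
    by_contra h
    push_neg at h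
    have h1 : q ^ n ≤ 1 ^ n := Nat.pow_le_pow_left (by omega) n
    simp at h1
    omega
  have hn1 : 1 ≤ n := by
    by_contra h
    push_neg at h
    interval_cases n
    simp at hCuniv
    omega
  -- choose the number of steps
  set t : ℕ := if ℓ ≤ n then (n - ℓ) / (r + ℓ) + 1 else 0 with ht
  have hrl : 0 < r + ℓ := by omega
  have ht1 : t * (r + ℓ) ≤ n + r := by
    by_cases hln : ℓ ≤ n
    · simp only [ht, if_pos hln]
      have hd := Nat.div_mul_le_self (n - ℓ) (r + ℓ)
      have : ((n - ℓ) / (r + ℓ) + 1) * (r + ℓ) = (n - ℓ) / (r + ℓ) * (r + ℓ) + (r + ℓ) := by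
        ring
      omega
    · simp only [ht, if_neg hln]
      omega
  have ht2 : n ≤ t * (r + ℓ) + ℓ := by
    by_cases hln : ℓ ≤ n
    · simp only [ht, if_pos hln]
      have key : n - ℓ < ((n - ℓ) / (r + ℓ) + 1) * (r + ℓ) := by
        calc n - ℓ = (r + ℓ) * ((n - ℓ) / (r + ℓ)) + (n - ℓ) % (r + ℓ) :=
              (Nat.div_add_mod _ _).symm
          _ < (r + ℓ) * ((n - ℓ) / (r + ℓ)) + (r + ℓ) :=
              Nat.add_lt_add_left (Nat.mod_lt _ hrl) _
          _ = ((n - ℓ) / (r + ℓ) + 1) * (r + ℓ) := by ring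
      calc n = (n - ℓ) + ℓ := (Nat.sub_add_cancel hln).symm
        _ ≤ ((n - ℓ) / (r + ℓ) + 1) * (r + ℓ) + ℓ := Nat.add_le_add_right key.le _
    · simp only [ht, if_neg hln]
      omega
  -- apply the key lemma
  obtain ⟨D, -, hDcard, hinj⟩ := coop_key C r ℓ hloc t ∅ (by simpa using ht1)
  have hDle : D.card ≤ n := by
    calc D.card ≤ Fintype.card (Fin n) := Finset.card_le_univ D
      _ = n := by simp
  -- counting : C.card ≤ q ^ (n - t * ℓ)
  have hcount : C.card ≤ q ^ (n - t * ℓ) := by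
    classical
    have hinj' : Set.InjOn (fun (c : Fin n → Fin q) => (fun x : (Dᶜ : Finset (Fin n)) => c x))
        (C : Set (Fin n → Fin q)) := by
      intro c₁ hc₁ c₂ hc₂ hfeq
      apply hinj c₁ hc₁ c₂ hc₂
      intro x hx
      have : x ∈ (Dᶜ : Finset (Fin n)) := Finset.mem_compl.mpr hx
      exact congrFun hfeq ⟨x, this⟩
    have := Finset.card_le_card_of_injOn
      (fun (c : Fin n → Fin q) => (fun x : (Dᶜ : Finset (Fin n)) => c x))
      (fun c _ => Finset.mem_univ _) hinj'
    calc C.card ≤ (Finset.univ : Finset ((Dᶜ : Finset (Fin n)) → Fin q)).card := this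
      _ = q ^ (n - t * ℓ) := by
          simp [Finset.card_univ, Finset.card_compl, hDcard]
  have htln : t * ℓ ≤ n := by omega
  -- pass to logarithms
  have hq1 : (1 : ℝ) < q := by exact_mod_cast by omega
  have hk2 : k ≤ ((n - t * ℓ : ℕ) : ℝ) := by
    rw [hk]
    have hlog : Real.logb q C.card ≤ Real.logb q ((q : ℝ) ^ (n - t * ℓ)) := by
      apply Real.logb_le_logb_of_le hq1 (by exact_mod_cast (by omega : 0 < C.card))
      exact_mod_cast hcount
    calc Real.logb q C.card ≤ Real.logb q ((q : ℝ) ^ (n - t * ℓ)) := hlog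
      _ = ((n - t * ℓ : ℕ) : ℝ) := by
          rw [Real.logb_pow, Real.logb_self_eq_one hq1]
          ring
  -- real arithmetic
  have hncast : ((n - t * ℓ : ℕ) : ℝ) = (n : ℝ) - (t : ℝ) * ℓ := by
    push_cast [htln]
    ring
  have hnR : (0 : ℝ) < n := by exact_mod_cast hn1
  have hrR : (0 : ℝ) < r := by exact_mod_cast hr
  have hℓR : (0 : ℝ) < ℓ := by exact_mod_cast hℓ
  have hrlR : (0 : ℝ) < (r : ℝ) + ℓ := by linarith
  have ht2R : (n : ℝ) ≤ (t : ℝ) * ((r : ℝ) + ℓ) + ℓ := by exact_mod_cast ht2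
  have hmain : ((n : ℝ) - (t : ℝ) * ℓ) / n ≤ (r : ℝ) / (r + ℓ) + (1 / n) * ((ℓ : ℝ) ^ 2 / r) := by
    have hne1 : ((r : ℝ) + ℓ) ≠ 0 := ne_of_gt hrlR
    have hne2 : (r : ℝ) ≠ 0 := ne_of_gt hrR
    have hne3 : (n : ℝ) ≠ 0 := ne_of_gt hnR
    have hre : (r : ℝ) / (r + ℓ) + (1 / n) * ((ℓ : ℝ) ^ 2 / r)
        = ((r : ℝ) * r * n + (ℓ : ℝ) ^ 2 * (r + ℓ)) / (((r : ℝ) + ℓ) * r * n) := by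
      field_simp
    rw [hre, div_le_div_iff₀ hnR (by positivity)]
    nlinarith [mul_le_mul_of_nonneg_right ht2R (show (0 : ℝ) ≤ (ℓ : ℝ) * r by positivity),
      mul_pos hℓR hrR, mul_pos (mul_pos hℓR hℓR) hℓR]
  calc k / n ≤ ((n - t * ℓ : ℕ) : ℝ) / n := (div_le_div_iff_of_pos_right hnR).mpr hk2
      _ ≤ _ := by rw [hncast]; exact hmain
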